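/- arXiv:1709.08775 — 3 statements merged into one kernel-verified Lean document; each statement's English description precedes it below -/
import Mathlib

section
/- Let f(α,p) = α(1−2p)(α−4p)/(4p(1−p)) + 1 for p ∈ (0,1/2) and α ∈ [0,1]. Then f attains its unique global minimum at p = 1 − √2/2 and α = 2 − √2. -/
/-- Variance factor of the general trimean estimator for exponential samples. -/
noncomputable def trimeanVarFactor (α p : ℝ) : ℝ :=
  α * (1 - 2 * p) * (α - 4 * p) / (4 * p * (1 - p)) + 1

/-- `f(α,p) = α(1−2p)(α−4p)/(4p(1−p)) + 1` on `α ∈ [0,1]`, `p ∈ (0,1/2)` attains its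
unique global minimum at `p = 1 − √2/2`, `α = 2 − √2`. -/
theorem trimeanVarFactor_global_min (α p : ℝ)
    (hα0 : 0 ≤ α) (hα1 : α ≤ 1) (hp0 : 0 < p) (hp : p < 1 / 2) :
    trimeanVarFactor (2 - Real.sqrt 2) (1 - Real.sqrt 2 / 2) ≤ trimeanVarFactor α p ∧
    (trimeanVarFactor α p = trimeanVarFactor (2 - Real.sqrt 2) (1 - Real.sqrt 2 / 2) →
      α = 2 - Real.sqrt 2 ∧ p = 1 - Real.sqrt 2 / 2) := by
  set s := Real.sqrt 2 with hs_def
  have hs2 : s ^ 2 = 2 := Real.sq_sqrt (by norm_num)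
  have hs1 : 1 < s := by nlinarith [Real.sqrt_nonneg 2]
  have hs32 : s < 3 / 2 := by nlinarith [Real.sqrt_nonneg 2]
  have hden : 0 < 4 * p * (1 - p) := by nlinarith
  have hval : trimeanVarFactor (2 - s) (1 - s / 2) = 2 * s - 2 := by
    unfold trimeanVarFactor
    have h1 : 4 * (1 - s / 2) * (1 - (1 - s / 2)) = 2 * s - 2 := by nlinarith
    rw [h1]
    have h2 : (2 * s - 2) ≠ 0 := by nlinarith
    rw [div_add_one h2, div_eq_iff h2]
    linear_combination (1 - s) * hs2
  have key : (trimeanVarFactor α p - (2 * s - 2)) * (4 * p * (1 - p)) =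
      (1 - 2 * p) * (α - 2 * p) ^ 2 + 8 * p * (p - (1 - s / 2)) ^ 2 := by
    unfold trimeanVarFactor
    rw [sub_mul, add_mul, div_mul_cancel₀ _ hden.ne']
    linear_combination (-2 * p) * hs2
  have hA : 0 ≤ (1 - 2 * p) * (α - 2 * p) ^ 2 :=
    mul_nonneg (by linarith) (sq_nonneg _)
  have hB : 0 ≤ 8 * p * (p - (1 - s / 2)) ^ 2 := by positivity
  constructor
  · rw [hval]
    nlinarith
  · intro heq
    rw [hval] at heq
    have hN : (1 - 2 * p) * (α - 2 * p) ^ 2 + 8 * p * (p - (1 - s / 2)) ^ 2 = 0 := by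
      rw [← key, heq]; ring
    have hB0 : 8 * p * (p - (1 - s / 2)) ^ 2 = 0 := by linarith
    have hA0 : (1 - 2 * p) * (α - 2 * p) ^ 2 = 0 := by linarith
    have hBsq : (p - (1 - s / 2)) ^ 2 = 0 := by
      rcases mul_eq_zero.mp hB0 with h | h
      · exfalso; nlinarith
      · exact h
    have hpq : p = 1 - s / 2 := by
      have := pow_eq_zero_iff (n := 2) (by norm_num) |>.mp hBsq
      linarith
    have hAsq : (α - 2 * p) ^ 2 = 0 := by
      rcases mul_eq_zero.mp hA0 with h | h
      · exfalso; nlinarith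
      · exact h
    have hαq : α = 2 * p := by
      have := pow_eq_zero_iff (n := 2) (by norm_num) |>.mp hAsq
      linarith
    refine ⟨by rw [hαq, hpq]; ring, hpq⟩
end

section
/- The Hessian matrix of f(α,p) = α(1−2p)(α−4p)/(4p(1−p)) + 1 evaluated at α = 2−√2, p = 1−√2/2 is positive definite. -/
open Matrix

/-- The Hessian of `f(α,p) = α(1−2p)(α−4p)/(4p(1−p)) + 1` at `α = 2−√2`, `p = 1−√2/2`
is positive definite. -/
theorem trimeanVarFactor_hessian_posDef :
    let α : ℝ := 2 - Real.sqrt 2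
    let p : ℝ := 1 - Real.sqrt 2 / 2
    Matrix.PosDef
      (!![-((2 * p - 1) / (2 * p * (1 - p))),
          (2 * p ^ 2 - 2 * α * p ^ 2 + α * (2 * p - 1)) / (2 * p ^ 2 * (1 - p) ^ 2);
          (2 * p ^ 2 - 2 * α * p ^ 2 + α * (2 * p - 1)) / (2 * p ^ 2 * (1 - p) ^ 2),
          (2 * p ^ 3 * α * (2 - α) + α ^ 2 * p * (1 - p) + α ^ 2 * (2 * p - 1) ^ 2)
            / (2 * p ^ 3 * (1 - p) ^ 3)]) := by
  intro α p
  have hs2 : Real.sqrt 2 ^ 2 = 2 := Real.sq_sqrt (by norm_num)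
  have hs3 : Real.sqrt 2 ^ 3 = 2 * Real.sqrt 2 := by rw [pow_succ, hs2]
  have hs4 : Real.sqrt 2 ^ 4 = 4 := by rw [pow_succ, hs3]; nlinarith
  have hs5 : Real.sqrt 2 ^ 5 = 4 * Real.sqrt 2 := by rw [pow_succ, hs4]
  have hs6 : Real.sqrt 2 ^ 6 = 8 := by rw [pow_succ, hs5]; nlinarith
  have hs1 : 1 < Real.sqrt 2 := by
    nlinarith [Real.sqrt_nonneg 2]
  have hs15 : Real.sqrt 2 < 3 / 2 := by
    nlinarith [Real.sqrt_nonneg 2]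
  have hA : -((2 * p - 1) / (2 * p * (1 - p))) = 1 := by
    rw [neg_div', div_eq_one_iff_eq (by simp only [p]; ring_nf; nlinarith [hs2, hs3, hs4, hs5, hs6, hs1, hs15])]
    simp only [p]; ring_nf; nlinarith [hs2, hs3, hs4, hs5, hs6, hs1, hs15]
  have hB : (2 * p ^ 2 - 2 * α * p ^ 2 + α * (2 * p - 1)) / (2 * p ^ 2 * (1 - p) ^ 2)
      = -2 := by
    rw [div_eq_iff (by simp only [p]; ring_nf; nlinarith [hs2, hs3, hs4, hs5, hs6, hs1, hs15])]
    simp only [p, α]; ring_nf; nlinarith [hs2, hs3, hs4, hs5, hs6, hs1, hs15]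
  have hC : (2 * p ^ 3 * α * (2 - α) + α ^ 2 * p * (1 - p) + α ^ 2 * (2 * p - 1) ^ 2)
      / (2 * p ^ 3 * (1 - p) ^ 3) = 4 * Real.sqrt 2 + 4 := by
    rw [div_eq_iff (by simp only [p]; ring_nf; nlinarith [hs2, hs3, hs4, hs5, hs6, hs1, hs15])]
    simp only [p, α]; ring_nf; nlinarith [hs2, hs3, hs4, hs5, hs6, hs1, hs15]
  rw [hA, hB, hC]
  rw [Matrix.posDef_iff_dotProduct_mulVec]
  constructor
  · ext i j
    fin_cases i <;> fin_cases j <;>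
      simp [Matrix.conjTranspose_apply]
  · intro x hx
    have hx' : x 0 ≠ 0 ∨ x 1 ≠ 0 := by
      by_contra h
      push_neg at h
      exact hx (funext fun i => by fin_cases i <;> simp [h.1, h.2])
    simp [Matrix.mulVec, dotProduct, Fin.sum_univ_two]
    rcases hx' with h | h
    · rcases eq_or_ne (x 1) 0 with h1 | h1
      · rw [h1]; nlinarith [sq_pos_of_ne_zero h]
      · nlinarith [sq_pos_of_ne_zero h1, sq_nonneg (x 0 - 2 * x 1)]
    · nlinarith [sq_pos_of_ne_zero h, sq_nonneg (x 0 - 2 * x 1)]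
end

section
/- Let Σ be the 3×3 matrix with entries σ_ij = p_i(1−p_j)/(f(ξ_{p_i})f(ξ_{p_j})) for i ≤ j (symmetric), where (p_1,p_2,p_3) = (p, 1/2, 1−p) and the underlying distribution is exponential with mean λ. Then for A = [α/2, 1−α, α/2], one has A Σ Aᵀ = (α(1−2p)(α−4p)/(4p(1−p)) + 1)·λ². -/
open Finset

/-- For the asymptotic covariance matrix `Σ` of the sample quantiles at
`(p, 1/2, 1−p)` of an Exponential(λ) sample, with entries
`σ_ij = p_i(1−p_j)/(f(ξ_{p_i})f(ξ_{p_j}))` for `i ≤ j` (symmetric), where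
`f(ξ_q) = λ⁻¹(1−q)`, and weights `A = [α/2, 1−α, α/2]`, one has
`A Σ Aᵀ = (α(1−2p)(α−4p)/(4p(1−p)) + 1)·λ²`. -/
theorem general_trimean_variance_factor (lam α p : ℝ) (hlam : 0 < lam)
    (hα0 : 0 ≤ α) (hα1 : α ≤ 1) (hp0 : 0 < p) (hp : p < 1 / 2) :
    let ps : Fin 3 → ℝ := ![p, 1 / 2, 1 - p]
    let fq : Fin 3 → ℝ := fun i => lam⁻¹ * (1 - ps i)
    let S : Matrix (Fin 3) (Fin 3) ℝ := fun i j =>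
      min (ps i) (ps j) * (1 - max (ps i) (ps j)) / (fq i * fq j)
    let A : Fin 3 → ℝ := ![α / 2, 1 - α, α / 2]
    ∑ i : Fin 3, ∑ j : Fin 3, A i * S i j * A j
      = (α * (1 - 2 * p) * (α - 4 * p) / (4 * p * (1 - p)) + 1) * lam ^ 2 := by
  intro ps fq S A
  have h1 : p ≤ 1/2 := le_of_lt hp
  have h2 : (1:ℝ)/2 ≤ 1 - p := by linarith
  have h3 : p ≤ 1 - p := by linarith
  have hp1 : (1:ℝ) - p ≠ 0 := by positivity
  have hhalf : (1:ℝ) - 1/2 ≠ 0 := by norm_num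
  have hlam' : lam ≠ 0 := ne_of_gt hlam
  have hp' : p ≠ 0 := ne_of_gt hp0
  simp only [S, A, ps, fq, Fin.sum_univ_three, Matrix.cons_val_zero, Matrix.cons_val_one,
    Matrix.head_cons, Matrix.cons_val_two, Matrix.tail_cons,
    min_eq_left h1, min_eq_right h1, min_eq_left h3, min_eq_right h3,
    min_eq_left h2, min_eq_right h2,
    max_eq_left h1, max_eq_right h1, max_eq_left h3, max_eq_right h3,
    max_eq_left h2, max_eq_right h2, min_self, max_self]
  field_simp
  ring_nf
  field_simp
  ring
end
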